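/- Let x ∈ ℝⁿ with card(x) = k, and suppose that x̃_i ∉ (0, √g_i) for every i. Then a nonincreasing nonnegative vector z̃ ∈ ℝⁿ attains the supremum in the representation f**(x) = sup { 2⟨x̃, z̃⟩ − Σ_{i=1}^n max(z̃_i² − g_i, 0) : z̃ nonincreasing, nonnegative } if and only if z̃_i = x̃_i for all i ≤ k and z̃_i ∈ [0, min(x̃_k, √g_{k+1})] for all i > k (with the conventions x̃_0 = +∞ when k = 0 and √g_{n+1} = +∞ when k = n; summands with g_i = +∞ are interpreted as 0). -/

import Mathlib

open scoped RealInnerProductSpace ENNReal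
noncomputable section

/-- `ℝⁿ` with the Euclidean inner product and norm. -/
abbrev Evec (n : ℕ) := EuclideanSpace ℝ (Fin n)

/-- The number of nonzero entries of a vector. -/
def spcard {n : ℕ} (x : Evec n) : ℕ := (Finset.univ.filter (fun i => x i ≠ 0)).card

/-- The absolute values of the entries of `x` sorted in nonincreasing order,
as a `1`-based function on `ℕ` (with value `0` outside `{1,…,n}`, so the
convention `x̃_{n+1} = 0` is built in). -/
def sortedAbs {n : ℕ} (x : Evec n) : ℕ → ℝ :=
  fun j => if h : 1 ≤ j ∧ j ≤ n then
    |x ((Tuple.sort (fun i : Fin n => -|x i|)) ⟨j - 1, by omega⟩)| else 0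

/-- `G(k) = ∑_{i=1}^k g_i`. -/
def Gsum (g : ℕ → ℝ≥0∞) (k : ℕ) : ℝ≥0∞ := ∑ i ∈ Finset.Icc 1 k, g i

/-- `f(x) = G(card x) + ‖x‖²`, valued in `EReal`. -/
def fobj {n : ℕ} (g : ℕ → ℝ≥0∞) (x : Evec n) : EReal :=
  ((Gsum g (spcard x) : ℝ≥0∞) : EReal) + ((‖x‖ ^ 2 : ℝ) : EReal)

/-- The convex conjugate `f*` of `f`. -/
def fconj {n : ℕ} (g : ℕ → ℝ≥0∞) (y : Evec n) : EReal :=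
  ⨆ x : Evec n, ((⟪x, y⟫ : ℝ) : EReal) - fobj g x

/-- The biconjugate (convex envelope) `f**` of `f`. -/
def fbiconj {n : ℕ} (g : ℕ → ℝ≥0∞) (x : Evec n) : EReal :=
  ⨆ y : Evec n, ((⟪x, y⟫ : ℝ) : EReal) - fconj g y

/-- `v` is a subgradient of `f**` at `x`. -/
def IsSubgrad {n : ℕ} (g : ℕ → ℝ≥0∞) (v x : Evec n) : Prop :=
  ∀ w : Evec n, fbiconj g x + ((⟪v, w - x⟫ : ℝ) : EReal) ≤ fbiconj g w

/-- `z = (I − AᵀA)x + Aᵀb`. -/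
def zvec {n m : ℕ} (A : Evec n →L[ℝ] Evec m) (b : Evec m) (x : Evec n) : Evec n :=
  x - ContinuousLinearMap.adjoint A (A x) + ContinuousLinearMap.adjoint A b

/-- `x` is a stationary point of the relaxation `R_g(·) + ‖A·−b‖²`:
`2z` is a subgradient of `f**` at `x`, where `z = (I − AᵀA)x + Aᵀb`. -/
def IsStationaryPt {n m : ℕ} (g : ℕ → ℝ≥0∞) (A : Evec n →L[ℝ] Evec m) (b : Evec m)
    (x : Evec n) : Prop :=
  IsSubgrad g ((2 : ℝ) • zvec A b x) x

/-- `A` satisfies the RIP of order `r` with constant `δ`. -/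
def RIP {n m : ℕ} (A : Evec n →L[ℝ] Evec m) (r : ℕ) (δ : ℝ) : Prop :=
  ∀ w : Evec n, spcard w ≤ r →
    (1 - δ) * ‖w‖ ^ 2 ≤ ‖A w‖ ^ 2 ∧ ‖A w‖ ^ 2 ≤ (1 + δ) * ‖w‖ ^ 2

/-- Square root on `[0,∞]`, with `√(+∞) = +∞`. -/
def sqrtE (a : ℝ≥0∞) : ℝ≥0∞ := a ^ (1 / 2 : ℝ)

/-- The relaxed objective `R_g(x) + ‖Ax − b‖²`, where `R_g(x) = f**(x) − ‖x‖²`. -/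
def relaxObj {n m : ℕ} (g : ℕ → ℝ≥0∞) (A : Evec n →L[ℝ] Evec m) (b : Evec m)
    (x : Evec n) : EReal :=
  (fbiconj g x - ((‖x‖ ^ 2 : ℝ) : EReal)) + ((‖A x - b‖ ^ 2 : ℝ) : EReal)

/-- The original (unrelaxed) objective `G(card(x)) + ‖Ax − b‖²`. -/
def origObj {n m : ℕ} (g : ℕ → ℝ≥0∞) (A : Evec n →L[ℝ] Evec m) (b : Evec m)
    (x : Evec n) : EReal :=
  ((Gsum g (spcard x) : ℝ≥0∞) : EReal) + ((‖A x - b‖ ^ 2 : ℝ) : EReal)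

/-- `x` is a local minimizer of `F`. -/
def IsLocalMinimizer {n : ℕ} (F : Evec n → EReal) (x : Evec n) : Prop :=
  ∃ U ∈ nhds x, ∀ w ∈ U, F x ≤ F w

namespace Aux



lemma sqrtE_top : sqrtE ⊤ = ⊤ := ENNReal.top_rpow_of_pos (by norm_num)

lemma sqrtE_mono : Monotone sqrtE := fun a b h => ENNReal.rpow_le_rpow h (by norm_num)

lemma sq_ofReal {t : ℝ} (ht : 0 ≤ t) :
    (ENNReal.ofReal t) ^ (2 : ℝ) = ENNReal.ofReal (t ^ 2) := by
  rw [ENNReal.ofReal_rpow_of_nonneg ht (by norm_num)]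
  norm_num

lemma sqrtE_le_ofReal_iff {a : ℝ≥0∞} {t : ℝ} (ht : 0 ≤ t) :
    sqrtE a ≤ ENNReal.ofReal t ↔ a ≤ ENNReal.ofReal (t ^ 2) := by
  rw [sqrtE, ← ENNReal.rpow_le_rpow_iff (show (0:ℝ) < 2 by norm_num),
    ← ENNReal.rpow_mul, sq_ofReal ht]
  norm_num

lemma ofReal_le_sqrtE_iff {a : ℝ≥0∞} {t : ℝ} (ht : 0 ≤ t) :
    ENNReal.ofReal t ≤ sqrtE a ↔ ENNReal.ofReal (t ^ 2) ≤ a := by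
  rw [sqrtE, ← ENNReal.rpow_le_rpow_iff (show (0:ℝ) < 2 by norm_num),
    ← ENNReal.rpow_mul, sq_ofReal ht]
  norm_num

lemma coe_ennreal_real {e : ℝ≥0∞} (he : e ≠ ⊤) : ((e.toReal : ℝ) : EReal) = (e : EReal) := by
  have h := EReal.coe_toReal (x := (e : EReal))
    (by simpa [EReal.coe_ennreal_eq_top_iff] using he) (EReal.coe_ennreal_ne_bot e)
  rwa [EReal.toReal_coe_ennreal] at h


variable {n : ℕ} (x : Evec n)


lemma sortedAbs_eq (i : Fin n) :
    sortedAbs x ((i : ℕ) + 1) = |x ((Tuple.sort (fun j : Fin n => -|x j|)) i)| := by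
  have h : 1 ≤ (i : ℕ) + 1 ∧ (i : ℕ) + 1 ≤ n := ⟨by omega, by omega⟩
  simp only [sortedAbs, dif_pos h]
  congr 1

lemma sortedAbs_nonneg (j : ℕ) : 0 ≤ sortedAbs x j := by
  unfold sortedAbs
  split
  · exact abs_nonneg _
  · exact le_refl 0

lemma sortedAbs_anti {i j : Fin n} (h : i ≤ j) :
    sortedAbs x ((j : ℕ) + 1) ≤ sortedAbs x ((i : ℕ) + 1) := by
  rw [sortedAbs_eq, sortedAbs_eq]
  have := Tuple.monotone_sort (fun j : Fin n => -|x j|) h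
  simpa using this

lemma sum_sq_sortedAbs : ∑ i : Fin n, (sortedAbs x ((i : ℕ) + 1)) ^ 2 = ‖x‖ ^ 2 := by
  have h1 : ∑ i : Fin n, (sortedAbs x ((i : ℕ) + 1)) ^ 2 = ∑ i : Fin n, (x i) ^ 2 := by
    rw [← Equiv.sum_comp (Tuple.sort (fun j : Fin n => -|x j|)) (fun i => (x i) ^ 2)]
    exact Finset.sum_congr rfl fun i _ => by rw [sortedAbs_eq]; exact sq_abs _
  rw [h1, EuclideanSpace.norm_eq, Real.sq_sqrt (by positivity)]
  simp [sq_abs]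

lemma card_sortedAbs_ne :
    (Finset.univ.filter (fun i : Fin n => sortedAbs x ((i : ℕ) + 1) ≠ 0)).card = spcard x := by
  unfold spcard
  apply Finset.card_bij' (fun a _ => (Tuple.sort (fun j : Fin n => -|x j|)) a)
    (fun b _ => (Tuple.sort (fun j : Fin n => -|x j|)).symm b)
  · intro a ha
    simp only [Finset.mem_filter, Finset.mem_univ, true_and] at ha ⊢
    rw [sortedAbs_eq] at ha
    simpa using ha
  · intro b hb
    simp only [Finset.mem_filter, Finset.mem_univ, true_and] at hb ⊢
    rw [sortedAbs_eq, ne_eq, abs_eq_zero, Equiv.apply_symm_apply]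
    simpa using hb
  · intro a _; simp
  · intro b _; simp

lemma spcard_le : spcard x ≤ n := by
  classical
  have h := Finset.card_filter_le (Finset.univ : Finset (Fin n)) (fun i => x i ≠ 0)
  simpa [spcard] using h

lemma sortedAbs_ne_iff (i : Fin n) :
    sortedAbs x ((i : ℕ) + 1) ≠ 0 ↔ (i : ℕ) < spcard x := by
  classical
  set P := Finset.univ.filter (fun i : Fin n => sortedAbs x ((i : ℕ) + 1) ≠ 0) with hP
  have hcard : P.card = spcard x := card_sortedAbs_ne x
  have hdc : ∀ a b : Fin n, a ≤ b → b ∈ P → a ∈ P := by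
    intro a b hab hb
    simp only [hP, Finset.mem_filter, Finset.mem_univ, true_and] at hb ⊢
    have h1 := sortedAbs_anti x hab
    have h2 := sortedAbs_nonneg x ((b : ℕ) + 1)
    intro h; rw [h] at h1
    exact hb (le_antisymm h1 h2)
  constructor
  · intro hi
    have hmem : i ∈ P := by simp [hP, hi]
    have : Finset.Iic i ⊆ P := fun a ha => hdc a i (Finset.mem_Iic.mp ha) hmem
    have hc := Finset.card_le_card this
    rw [Fin.card_Iic] at hc
    omega
  · intro hi
    by_contra hne
    have hni : i ∉ P := by simp [hP, hne]
    have hsub : P ⊆ Finset.Iio i := by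
      intro b hb
      rw [Finset.mem_Iio]
      by_contra hbi
      exact hni (hdc i b (le_of_not_gt hbi) hb)
    have hc := Finset.card_le_card hsub
    rw [Fin.card_Iio] at hc
    omega

lemma card_filter_lt_val (k : ℕ) (hk : k ≤ n) :
    (Finset.univ.filter (fun a : Fin n => (a : ℕ) < k)).card = k := by
  classical
  have himg : Finset.map (Fin.castLEEmb hk) Finset.univ
      = Finset.univ.filter (fun a : Fin n => (a : ℕ) < k) := by
    ext a
    simp only [Finset.mem_map, Finset.mem_univ, true_and, Finset.mem_filter]
    constructor
    · rintro ⟨b, rfl⟩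
      exact b.isLt
    · intro ha
      exact ⟨⟨(a : ℕ), ha⟩, by ext; simp⟩
  rw [← himg, Finset.card_map, Finset.card_univ, Fintype.card_fin]



lemma norm_sq_eq (v : Evec n) : ‖v‖ ^ 2 = ∑ i, (v i) ^ 2 := by
  rw [EuclideanSpace.norm_eq, Real.sq_sqrt (by positivity)]
  simp [sq_abs]

section Main

variable {g : ℕ → ℝ≥0∞} (hgmono : Monotone g)
  (hx : ∀ i, ¬(0 < sortedAbs x i ∧ ENNReal.ofReal (sortedAbs x i) < sqrtE (g i)))

include hx

lemma hxE : ∀ i : Fin n, (i : ℕ) < spcard x →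
    g ((i : ℕ) + 1) ≠ ⊤ ∧ (g ((i : ℕ) + 1)).toReal ≤ (sortedAbs x ((i : ℕ) + 1)) ^ 2 := by
  intro i hik
  set s := sortedAbs x ((i : ℕ) + 1) with hs
  have hspos : 0 < s :=
    lt_of_le_of_ne (sortedAbs_nonneg x _) (Ne.symm ((sortedAbs_ne_iff x i).mpr hik))
  have h := hx ((i : ℕ) + 1)
  push_neg at h
  have hle : sqrtE (g ((i : ℕ) + 1)) ≤ ENNReal.ofReal s := h hspos
  have hle2 : g ((i : ℕ) + 1) ≤ ENNReal.ofReal (s ^ 2) :=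
    (sqrtE_le_ofReal_iff hspos.le).mp hle
  have htop : g ((i : ℕ) + 1) ≠ ⊤ := by
    intro hT
    rw [hT] at hle2
    exact (lt_irrefl ⊤ (lt_of_le_of_lt hle2 ENNReal.ofReal_lt_top)).elim
  exact ⟨htop, (ENNReal.le_ofReal_iff_toReal_le htop (sq_nonneg s)).mp hle2⟩

lemma Gsum_ne_top {m : ℕ} (hm : m ≤ spcard x) : Gsum g m ≠ ⊤ := by
  unfold Gsum
  rw [ne_eq, ENNReal.sum_eq_top]
  rintro ⟨i, hi, hT⟩
  rw [Finset.mem_Icc] at hi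
  have hkn := spcard_le x
  have hin : i - 1 < n := by omega
  have := (hxE x hx ⟨i - 1, hin⟩ (by simp; omega)).1
  simp only [show i - 1 + 1 = i by omega] at this
  exact this hT

include hgmono in
lemma Gsum_dist_bound (w : Evec n) (hw : Gsum g (spcard w) ≠ ⊤) :
    (Gsum g (spcard x)).toReal ≤ (Gsum g (spcard w)).toReal + ‖w - x‖ ^ 2 := by
  classical
  set k := spcard x with hk
  set j := spcard w with hj
  have hkn : k ≤ n := spcard_le x
  rcases le_or_gt k j with hkj | hjk
  · have h1 : Gsum g k ≤ Gsum g j := by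
      apply Finset.sum_le_sum_of_subset
      exact Finset.Icc_subset_Icc le_rfl hkj
    have := ENNReal.toReal_mono hw h1
    nlinarith [sq_nonneg ‖w - x‖]
  · -- j < k
    have hk1 : 1 ≤ k := by omega
    set σ := Tuple.sort (fun i : Fin n => -|x i|) with hσ
    set km1 : Fin n := ⟨k - 1, by omega⟩ with hkm1
    have hkm1v : ((km1 : ℕ)) + 1 = k := by simp [hkm1]; omega
    set sk := sortedAbs x k with hsk
    have hgk : g k ≠ ⊤ ∧ (g k).toReal ≤ sk ^ 2 := by
      have := hxE x hx km1 (by simp [hkm1]; omega)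
      rwa [hkm1v] at this
    have hsk0 : 0 ≤ sk := sortedAbs_nonneg x k
    -- split Gsum
    have hsplit : Gsum g k = Gsum g j + ∑ i ∈ Finset.Ioc j k, g i := by
      unfold Gsum
      have hdisj : Disjoint (Finset.Ioc 0 j) (Finset.Ioc j k) := by
        rw [Finset.disjoint_left]
        intro a ha hb
        rw [Finset.mem_Ioc] at ha hb
        omega
      rw [show (1 : ℕ) = 0 + 1 from rfl, Finset.Icc_add_one_left_eq_Ioc, Finset.Icc_add_one_left_eq_Ioc,
        ← Finset.sum_union hdisj,
        Finset.Ioc_union_Ioc_eq_Ioc (Nat.zero_le j) hjk.le]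
    have hGk : Gsum g k ≠ ⊤ := Gsum_ne_top x hx le_rfl
    have hIocfin : ∑ i ∈ Finset.Ioc j k, g i ≠ ⊤ := by
      intro hT
      exact hGk (by rw [hsplit, hT]; simp)
    have hIoc : (∑ i ∈ Finset.Ioc j k, g i).toReal ≤ (k - j : ℕ) * (g k).toReal := by
      have h1 : ∑ i ∈ Finset.Ioc j k, g i ≤ (Finset.Ioc j k).card • g k :=
        Finset.sum_le_card_nsmul _ _ _ (fun i hi => hgmono (Finset.mem_Ioc.mp hi).2)
      have h2 := ENNReal.toReal_mono (by
        simp only [nsmul_eq_mul]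
        exact ENNReal.mul_ne_top (ENNReal.natCast_ne_top _) hgk.1) h1
      rw [nsmul_eq_mul, ENNReal.toReal_mul, Nat.card_Ioc] at h2
      rwa [ENNReal.toReal_natCast] at h2
    -- combinatorial bound
    set K := Finset.univ.filter (fun a : Fin n => (a : ℕ) < k) with hK
    set T := K.filter (fun a => w (σ a) = 0) with hT
    have hKcard : K.card = k := card_filter_lt_val k hkn
    have hUcard : (K.filter (fun a => ¬ w (σ a) = 0)).card ≤ j := by
      rw [hj]
      unfold spcard
      apply Finset.card_le_card_of_injOn σ
      · intro a ha
        simp only [Finset.mem_coe, Finset.mem_filter, Finset.mem_univ, true_and] at ha ⊢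
        exact ha.2
      · exact σ.injective.injOn
    have hTcard : k - j ≤ T.card := by
      have h5 := Finset.card_filter_add_card_filter_not
        (s := K) (p := fun a => w (σ a) = 0)
      rw [← hT] at h5
      omega
    have hterm : ∀ a ∈ T, sk ^ 2 ≤ (w (σ a) - x (σ a)) ^ 2 := by
      intro a ha
      simp only [hT, hK, Finset.mem_filter, Finset.mem_univ, true_and] at ha
      rw [ha.2, zero_sub, neg_sq]
      have h1 : sk ≤ sortedAbs x ((a : ℕ) + 1) := by
        rw [hsk, ← hkm1v]
        exact sortedAbs_anti x (by rw [Fin.le_def]; simp [hkm1]; omega)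
      have h2 : sortedAbs x ((a : ℕ) + 1) = |x (σ a)| := sortedAbs_eq x a
      calc sk ^ 2 ≤ (sortedAbs x ((a : ℕ) + 1)) ^ 2 := by
            apply pow_le_pow_left₀ hsk0 h1
        _ = (x (σ a)) ^ 2 := by rw [h2, sq_abs]
    have hnorm : (k - j : ℕ) * sk ^ 2 ≤ ‖w - x‖ ^ 2 := by
      have h1 : ‖w - x‖ ^ 2 = ∑ a : Fin n, (w (σ a) - x (σ a)) ^ 2 := by
        rw [norm_sq_eq]
        simp only [PiLp.sub_apply]
        rw [← Equiv.sum_comp σ (fun i => (w i - x i) ^ 2)]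
      have h2 : ∑ a ∈ T, (w (σ a) - x (σ a)) ^ 2 ≤ ∑ a : Fin n, (w (σ a) - x (σ a)) ^ 2 :=
        Finset.sum_le_sum_of_subset_of_nonneg (Finset.subset_univ T)
          (fun a _ _ => sq_nonneg _)
      have h3 : (T.card : ℝ) * sk ^ 2 ≤ ∑ a ∈ T, (w (σ a) - x (σ a)) ^ 2 := by
        calc (T.card : ℝ) * sk ^ 2 = ∑ _a ∈ T, sk ^ 2 := by
              rw [Finset.sum_const, nsmul_eq_mul]
          _ ≤ _ := Finset.sum_le_sum hterm
      have h4 : ((k - j : ℕ) : ℝ) * sk ^ 2 ≤ (T.card : ℝ) * sk ^ 2 := by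
        apply mul_le_mul_of_nonneg_right _ (sq_nonneg sk)
        exact_mod_cast hTcard
      linarith
    have hfinal : ((k - j : ℕ) : ℝ) * (g k).toReal ≤ ((k - j : ℕ) : ℝ) * sk ^ 2 := by
      apply mul_le_mul_of_nonneg_left hgk.2 (by positivity)
    have hGkeq : (Gsum g k).toReal
        = (Gsum g j).toReal + (∑ i ∈ Finset.Ioc j k, g i).toReal := by
      rw [hsplit, ENNReal.toReal_add hw hIocfin]
    linarith

omit hx in
lemma fobj_eq_real {g : ℕ → ℝ≥0∞} (v : Evec n) (h : Gsum g (spcard v) ≠ ⊤) :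
    fobj g v = (((Gsum g (spcard v)).toReal + ‖v‖ ^ 2 : ℝ) : EReal) := by
  unfold fobj
  rw [EReal.coe_add, coe_ennreal_real h]

include hgmono hx in
lemma fbiconj_eq : fbiconj g x = (((Gsum g (spcard x)).toReal + ‖x‖ ^ 2 : ℝ) : EReal) := by
  set k := spcard x with hk
  have hGx : Gsum g k ≠ ⊤ := Gsum_ne_top x hx le_rfl
  have hfobjx : fobj g x = (((Gsum g k).toReal + ‖x‖ ^ 2 : ℝ) : EReal) := fobj_eq_real x hGx
  apply le_antisymm
  · refine iSup_le fun y => ?_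
    have h1 : ((⟪x, y⟫ : ℝ) : EReal) - fobj g x ≤ fconj g y :=
      le_iSup (fun w : Evec n => ((⟪w, y⟫ : ℝ) : EReal) - fobj g w) x
    calc ((⟪x, y⟫ : ℝ) : EReal) - fconj g y
        ≤ ((⟪x, y⟫ : ℝ) : EReal) - (((⟪x, y⟫ : ℝ) : EReal) - fobj g x) :=
          EReal.sub_le_sub le_rfl h1
      _ = (((Gsum g k).toReal + ‖x‖ ^ 2 : ℝ) : EReal) := by
          rw [hfobjx, ← EReal.coe_sub, ← EReal.coe_sub]
          exact congrArg Real.toEReal (by ring)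
  · have hconj : fconj g ((2 : ℝ) • x) ≤ ((‖x‖ ^ 2 - (Gsum g k).toReal : ℝ) : EReal) := by
      refine iSup_le fun w => ?_
      by_cases hw : Gsum g (spcard w) = ⊤
      · have hft : fobj g w = ⊤ := by
          unfold fobj
          rw [hw, EReal.coe_ennreal_top, EReal.top_add_coe]
        rw [hft, EReal.sub_top]
        exact bot_le
      · rw [fobj_eq_real w hw, ← EReal.coe_sub, EReal.coe_le_coe_iff]
        have hb := Gsum_dist_bound x hgmono hx w hw
        have hw2 := norm_sub_sq_real w x
        have hip : (⟪w, (2:ℝ) • x⟫ : ℝ) = 2 * ⟪w, x⟫ := real_inner_smul_right w x 2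
        rw [hip]
        linarith
    have h2 : ((2 * ‖x‖ ^ 2 : ℝ) : EReal) - ((‖x‖ ^ 2 - (Gsum g k).toReal : ℝ) : EReal)
        ≤ ((⟪x, (2:ℝ) • x⟫ : ℝ) : EReal) - fconj g ((2:ℝ) • x) := by
      have hip : (⟪x, (2:ℝ) • x⟫ : ℝ) = 2 * ‖x‖ ^ 2 := by
        rw [real_inner_smul_right, real_inner_self_eq_norm_sq]
      rw [hip]
      exact EReal.sub_le_sub le_rfl hconj
    calc (((Gsum g k).toReal + ‖x‖ ^ 2 : ℝ) : EReal)
        = ((2 * ‖x‖ ^ 2 : ℝ) : EReal) - ((‖x‖ ^ 2 - (Gsum g k).toReal : ℝ) : EReal) := by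
          rw [← EReal.coe_sub]
          exact congrArg Real.toEReal (by ring)
      _ ≤ ((⟪x, (2:ℝ) • x⟫ : ℝ) : EReal) - fconj g ((2:ℝ) • x) := h2
      _ ≤ fbiconj g x :=
          le_iSup (fun y : Evec n => ((⟪x, y⟫ : ℝ) : EReal) - fconj g y) ((2:ℝ) • x)

end Main


end Aux

open Aux

/-- If `card(x) = k` and `x̃_i ∉ (0, √g_i)` for all `i`, then a
nonincreasing nonnegative `z̃` attains the supremum in the representation of `f**(x)`
iff `z̃_i = x̃_i` for `i ≤ k` and `z̃_i ∈ [0, min(x̃_k, √g_{k+1})]` for `i > k`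
(with `x̃_0 = +∞` when `k = 0` and `√g_{n+1} = +∞` when `k = n`). -/
theorem maximizer_characterization
    {n : ℕ} (g : ℕ → ℝ≥0∞) (hg0 : g 0 = 0) (hgmono : Monotone g)
    (x : Evec n) (k : ℕ) (hk : spcard x = k)
    (hx : ∀ i, ¬(0 < sortedAbs x i ∧ ENNReal.ofReal (sortedAbs x i) < sqrtE (g i)))
    (z : Fin n → ℝ) (hz1 : ∀ i j : Fin n, i ≤ j → z j ≤ z i) (hz2 : ∀ i, 0 ≤ z i) :
    ((((2 * ∑ i : Fin n, sortedAbs x ((i : ℕ) + 1) * z i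
        - ∑ i : Fin n, if g ((i : ℕ) + 1) = ⊤ then (0 : ℝ)
            else max ((z i) ^ 2 - (g ((i : ℕ) + 1)).toReal) 0) : ℝ) : EReal)
      = fbiconj g x)
    ↔ ((∀ i : Fin n, (i : ℕ) + 1 ≤ k → z i = sortedAbs x ((i : ℕ) + 1)) ∧
       (∀ i : Fin n, k < (i : ℕ) + 1 →
         ENNReal.ofReal (z i) ≤
           min (if k = 0 then (⊤ : ℝ≥0∞) else ENNReal.ofReal (sortedAbs x k))
               (if k = n then (⊤ : ℝ≥0∞) else sqrtE (g (k + 1))))) := by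
  classical
  subst hk
  set k := spcard x with hk
  have hkn : k ≤ n := spcard_le x
  set s : Fin n → ℝ := fun i => sortedAbs x ((i : ℕ) + 1) with hs
  set m : Fin n → ℝ := fun i => if g ((i : ℕ) + 1) = ⊤ then (0 : ℝ)
      else max ((z i) ^ 2 - (g ((i : ℕ) + 1)).toReal) 0 with hm
  set t : Fin n → ℝ := fun i => 2 * (s i * z i) - m i with ht
  set b : Fin n → ℝ := fun i =>
      if (i : ℕ) < k then (s i) ^ 2 + (g ((i : ℕ) + 1)).toReal else 0 with hb
  -- basic facts
  have hs_nonneg : ∀ i : Fin n, 0 ≤ s i := fun i => sortedAbs_nonneg x _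
  have hs_pos : ∀ i : Fin n, (i : ℕ) < k → 0 < s i := fun i hik =>
    lt_of_le_of_ne (hs_nonneg i) (Ne.symm ((sortedAbs_ne_iff x i).mpr hik))
  have hs_zero : ∀ i : Fin n, k ≤ (i : ℕ) → s i = 0 := by
    intro i hik
    by_contra h
    have := (sortedAbs_ne_iff x i).mp h
    omega
  have hgE := hxE x hx
  rw [← hk] at hgE
  have hm_nonneg : ∀ i : Fin n, 0 ≤ m i := by
    intro i
    rw [hm]
    dsimp only
    split
    · exact le_rfl
    · exact le_max_right _ _
  have hm_ge : ∀ i : Fin n, g ((i : ℕ) + 1) ≠ ⊤ →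
      (z i) ^ 2 - (g ((i : ℕ) + 1)).toReal ≤ m i := by
    intro i hgT
    rw [hm]
    dsimp only
    rw [if_neg hgT]
    exact le_max_left _ _
  -- m i = 0 characterization
  have hm_zero_iff : ∀ i : Fin n,
      (m i = 0 ↔ ENNReal.ofReal (z i) ≤ sqrtE (g ((i : ℕ) + 1))) := by
    intro i
    rw [hm]
    dsimp only
    by_cases hgT : g ((i : ℕ) + 1) = ⊤
    · simp [hgT, sqrtE_top]
    · rw [if_neg hgT, ofReal_le_sqrtE_iff (hz2 i)]
      rw [ENNReal.ofReal_le_iff_le_toReal hgT]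
      constructor
      · intro h
        have := le_max_left ((z i) ^ 2 - (g ((i : ℕ) + 1)).toReal) (0 : ℝ)
        rw [h] at this
        linarith
      · intro h
        rw [max_eq_right (by linarith)]
  -- termwise inequality
  have hle : ∀ i ∈ Finset.univ, t i ≤ b i := by
    intro i _
    rw [ht, hb]
    dsimp only
    by_cases hik : (i : ℕ) < k
    · rw [if_pos hik]
      obtain ⟨hgT, hgle⟩ := hgE i hik
      have hg0' : 0 ≤ (g ((i : ℕ) + 1)).toReal := ENNReal.toReal_nonneg
      have h1 := hm_ge i hgT
      have h2 := hm_nonneg i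
      nlinarith [sq_nonneg (s i - z i), hz2 i, hs_pos i hik]
    · rw [if_neg hik, hs_zero i (by omega)]
      have := hm_nonneg i
      linarith
  -- termwise equality characterization
  have hiff : ∀ i : Fin n, (t i = b i ↔
      (if (i : ℕ) < k then z i = s i else m i = 0)) := by
    intro i
    rw [ht, hb]
    dsimp only
    by_cases hik : (i : ℕ) < k
    · rw [if_pos hik, if_pos hik]
      obtain ⟨hgT, hgle⟩ := hgE i hik
      have hg0' : 0 ≤ (g ((i : ℕ) + 1)).toReal := ENNReal.toReal_nonneg
      constructor
      · intro heq
        have h1 := hm_ge i hgT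
        have h2 := hm_nonneg i
        have h3 : (s i - z i) ^ 2 ≤ 0 := by nlinarith
        have h4 : (s i - z i) ^ 2 = 0 := le_antisymm h3 (sq_nonneg _)
        have h5 : s i - z i = 0 := by
          have := sq_eq_zero_iff.mp h4
          exact this
        linarith
      · intro hzi
        rw [hm]
        dsimp only
        rw [if_neg hgT, hzi, max_eq_left (by nlinarith)]
        ring
    · rw [if_neg hik, if_neg hik, hs_zero i (by omega), zero_mul, mul_zero, zero_sub,
        neg_eq_zero]
  -- the value of fbiconj
  have hval := fbiconj_eq x hgmono hx
  rw [← hk] at hval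
  rw [hval, EReal.coe_eq_coe_iff]
  -- rewrite LHS sum
  have hΦ : 2 * ∑ i : Fin n, sortedAbs x ((i : ℕ) + 1) * z i
      - (∑ i : Fin n, if g ((i : ℕ) + 1) = ⊤ then (0 : ℝ)
          else max ((z i) ^ 2 - (g ((i : ℕ) + 1)).toReal) 0)
      = ∑ i : Fin n, t i := by
    rw [ht]
    dsimp only
    rw [Finset.sum_sub_distrib, ← Finset.mul_sum]
  -- rewrite RHS value
  set K := Finset.univ.filter (fun i : Fin n => (i : ℕ) < k) with hK
  have hGfin : ∀ i ∈ Finset.Icc 1 k, g i ≠ ⊤ := by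
    intro i hi
    rw [Finset.mem_Icc] at hi
    have h := (hgE ⟨i - 1, by omega⟩ (by simp; omega)).1
    simpa [show i - 1 + 1 = i by omega] using h
  have hGsum : (Gsum g k).toReal = ∑ i ∈ K, (g ((i : ℕ) + 1)).toReal := by
    unfold Gsum
    rw [ENNReal.toReal_sum hGfin]
    apply Finset.sum_bij' (i := fun (a : ℕ) (ha : a ∈ Finset.Icc 1 k) =>
        (⟨a - 1, by rw [Finset.mem_Icc] at ha; omega⟩ : Fin n))
      (j := fun (a : Fin n) (_ : a ∈ K) => (a : ℕ) + 1)
    case hi =>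
      intro a ha
      rw [Finset.mem_Icc] at ha
      simp only [hK, Finset.mem_filter, Finset.mem_univ, true_and]
      show a - 1 < k
      omega
    case hj =>
      intro a ha
      simp only [hK, Finset.mem_filter, Finset.mem_univ, true_and] at ha
      rw [Finset.mem_Icc]
      omega
    case left_neg =>
      intro a ha
      rw [Finset.mem_Icc] at ha
      show a - 1 + 1 = a
      omega
    case right_neg =>
      intro a ha
      ext
      show (a : ℕ) + 1 - 1 = (a : ℕ)
      omega
    case h =>
      intro a ha
      rw [Finset.mem_Icc] at ha
      have h' : a - 1 + 1 = a := by omega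
      show (g a).toReal = (g (a - 1 + 1)).toReal
      rw [h']
  have hxnorm : ‖x‖ ^ 2 = ∑ i ∈ K, (s i) ^ 2 := by
    rw [← sum_sq_sortedAbs x]
    symm
    apply Finset.sum_subset (Finset.subset_univ K)
    intro i _ hiK
    have hik : ¬ (i : ℕ) < k := by
      intro h
      exact hiK (by simp [hK, h])
    have h0 := hs_zero i (by omega)
    simp only [hs] at h0 ⊢
    simp [h0]
  have hV : (Gsum g k).toReal + ‖x‖ ^ 2 = ∑ i : Fin n, b i := by
    have hbsum : ∑ i : Fin n, b i
        = ∑ i ∈ K, ((s i) ^ 2 + (g ((i : ℕ) + 1)).toReal) := by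
      rw [hb, hK]
      exact (Finset.sum_filter _ _).symm
    rw [hbsum, Finset.sum_add_distrib, hGsum, hxnorm]
    ring
  rw [hΦ, hV, Finset.sum_eq_sum_iff_of_le hle]
  constructor
  · intro h
    have h1 : ∀ i : Fin n, (i : ℕ) < k → z i = s i := by
      intro i hik
      have := (hiff i).mp (h i (Finset.mem_univ i))
      rwa [if_pos hik] at this
    have h2 : ∀ i : Fin n, k ≤ (i : ℕ) → m i = 0 := by
      intro i hik
      have := (hiff i).mp (h i (Finset.mem_univ i))
      rwa [if_neg (by omega)] at this
    constructor
    · intro i hik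
      exact h1 i (by omega)
    · intro i hik
      have hik' : k ≤ (i : ℕ) := by omega
      apply le_min
      · by_cases hk0 : k = 0
        · rw [if_pos hk0]; exact le_top
        · rw [if_neg hk0]
          have hk1 : 1 ≤ k := by omega
          set km1 : Fin n := ⟨k - 1, by omega⟩ with hkm1
          have hzle : z i ≤ z km1 := hz1 km1 i (by
            rw [Fin.le_def]
            show k - 1 ≤ (i : ℕ)
            omega)
          have hzk : z km1 = s km1 := h1 km1 (by show k - 1 < k; omega)
          have hsk : s km1 = sortedAbs x k := by
            simp only [hs]
            congr 1
            show k - 1 + 1 = k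
            omega
          exact ENNReal.ofReal_le_ofReal (by rw [← hsk, ← hzk]; exact hzle)
      · by_cases hkn' : k = n
        · rw [if_pos hkn']; exact le_top
        · rw [if_neg hkn']
          have hklt : k < n := by omega
          set i0 : Fin n := ⟨k, hklt⟩ with hi0
          have hm0 := h2 i0 (by exact le_rfl)
          have hB : ENNReal.ofReal (z i0) ≤ sqrtE (g (k + 1)) := by
            have h3 := (hm_zero_iff i0).mp hm0
            exact h3
          have hzle : z i ≤ z i0 := hz1 i0 i (by
            rw [Fin.le_def]
            show k ≤ (i : ℕ)
            omega)
          exact le_trans (ENNReal.ofReal_le_ofReal hzle) hB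
  · rintro ⟨h1, h2⟩ i _
    rw [hiff i]
    by_cases hik : (i : ℕ) < k
    · rw [if_pos hik]
      exact h1 i (by omega)
    · rw [if_neg hik]
      have hik' : k < (i : ℕ) + 1 := by omega
      have hklt : k < n := by have := i.isLt; omega
      have hB := le_trans (h2 i hik') (min_le_right _ _)
      rw [if_neg (by omega)] at hB
      have h3 : ENNReal.ofReal (z i) ≤ sqrtE (g ((i : ℕ) + 1)) :=
        le_trans hB (sqrtE_mono (hgmono (by omega)))
      exact (hm_zero_iff i).mpr h3
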